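/- Let I = (-1,1), α > -1, and P a polynomial of degree at most p with p ≥ 1. Then there exists a constant C depending only on α (and not on p or P) such that ∫_I P'(x)² (1-x²)^{α+1} dx ≤ C p² ∫_I P(x)² (1-x²)^α dx. -/

import Mathlib

open MeasureTheory Polynomial Set intervalIntegral

lemma integrableOn_weight_right {β : ℝ} (hβ : -1 < β) :
    IntegrableOn (fun x : ℝ => (1 - x) ^ β) (Set.Icc (0:ℝ) 1) := by
  have h := ((intervalIntegral.intervalIntegrable_rpow' (a := 0) (b := 1) hβ).comp_sub_left 1).symm
  simp only [sub_zero, sub_self] at h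
  rw [intervalIntegrable_iff_integrableOn_Ioc_of_le (by norm_num)] at h
  rwa [integrableOn_Icc_iff_integrableOn_Ioc]

lemma integrableOn_weight_left {β : ℝ} (hβ : -1 < β) :
    IntegrableOn (fun x : ℝ => (1 + x) ^ β) (Set.Icc (-1:ℝ) 0) := by
  have h := (intervalIntegral.intervalIntegrable_rpow' (a := 0) (b := 1) hβ).comp_add_right 1
  simp only [zero_sub, sub_self] at h
  rw [intervalIntegrable_iff_integrableOn_Ioc_of_le (by norm_num)] at h
  rw [integrableOn_Icc_iff_integrableOn_Ioc]
  exact h.congr_fun (fun x hx => by rw [add_comm]) measurableSet_Ioc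

lemma rpow_factor_le {β x : ℝ} (h1 : (1:ℝ) ≤ x) (h2 : x ≤ 2) :
    x ^ β ≤ max 1 (2 ^ β) := by
  rcases le_or_gt 0 β with hb | hb
  · exact le_max_of_le_right (Real.rpow_le_rpow (by linarith) h2 hb)
  · exact le_max_of_le_left (Real.rpow_le_one_of_one_le_of_nonpos h1 hb.le)

lemma integrableOn_poly_weight (R : Polynomial ℝ) {β : ℝ} (hβ : -1 < β) :
    IntegrableOn (fun x => R.eval x * (1 - x^2) ^ β) (Set.Ioo (-1:ℝ) 1) := by
  obtain ⟨M, hM⟩ := (isCompact_Icc (a := (-1:ℝ)) (b := 1)).exists_bound_of_continuousOn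
    (R.continuous_aeval.continuousOn)
  have hM0 : 0 ≤ M := le_trans (norm_nonneg _) (hM 0 (by norm_num))
  set K : ℝ := max 1 ((2:ℝ) ^ β) with hK
  have hK0 : (0:ℝ) ≤ K := le_trans zero_le_one (le_max_left _ _)
  have hmeas : Measurable fun x : ℝ => R.eval x * (1 - x^2) ^ β := by
    exact (R.continuous_aeval.measurable).mul
      (((continuous_const.sub (continuous_pow 2)).measurable).pow_const β)
  have h1 : IntegrableOn (fun x => R.eval x * (1 - x^2) ^ β) (Set.Icc (0:ℝ) 1) := by
    refine Integrable.mono' (((integrableOn_weight_right hβ).const_mul (M * K))) 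
      hmeas.aestronglyMeasurable ?_
    filter_upwards [ae_restrict_mem measurableSet_Icc] with x hx
    obtain ⟨hx0, hx1⟩ := hx
    have hfac : (1 - x^2 : ℝ) ^ β = (1-x)^β * (1+x)^β := by
      rw [← Real.mul_rpow (by linarith) (by linarith)]; ring_nf
    rw [norm_mul, hfac]
    have h2 : (1+x)^β ≤ K := rpow_factor_le (by linarith) (by linarith)
    have h3 : ‖(1-x)^β * (1+x)^β‖ = (1-x)^β * (1+x)^β := by
      rw [Real.norm_eq_abs, abs_of_nonneg (mul_nonneg (Real.rpow_nonneg (by linarith) _) (Real.rpow_nonneg (by linarith) _))]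
    rw [h3]
    calc ‖R.eval x‖ * ((1-x)^β * (1+x)^β) ≤ M * ((1-x)^β * K) := by
          refine mul_le_mul (hM x (by constructor <;> linarith)) ?_ (mul_nonneg (Real.rpow_nonneg (by linarith) _) (Real.rpow_nonneg (by linarith) _)) hM0
          exact mul_le_mul_of_nonneg_left h2 (Real.rpow_nonneg (by linarith) _)
      _ = M * K * (1-x)^β := by ring
  have h2 : IntegrableOn (fun x => R.eval x * (1 - x^2) ^ β) (Set.Icc (-1:ℝ) 0) := by
    refine Integrable.mono' (((integrableOn_weight_left hβ).const_mul (M * K))) 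
      hmeas.aestronglyMeasurable ?_
    filter_upwards [ae_restrict_mem measurableSet_Icc] with x hx
    obtain ⟨hx0, hx1⟩ := hx
    have hfac : (1 - x^2 : ℝ) ^ β = (1-x)^β * (1+x)^β := by
      rw [← Real.mul_rpow (by linarith) (by linarith)]; ring_nf
    rw [norm_mul, hfac]
    have h2 : (1-x)^β ≤ K := rpow_factor_le (by linarith) (by linarith)
    have h3 : ‖(1-x)^β * (1+x)^β‖ = (1-x)^β * (1+x)^β := by
      rw [Real.norm_eq_abs, abs_of_nonneg (mul_nonneg (Real.rpow_nonneg (by linarith) _) (Real.rpow_nonneg (by linarith) _))]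
    rw [h3]
    calc ‖R.eval x‖ * ((1-x)^β * (1+x)^β) ≤ M * (K * (1+x)^β) := by
          refine mul_le_mul (hM x (by constructor <;> linarith)) ?_ (mul_nonneg (Real.rpow_nonneg (by linarith) _) (Real.rpow_nonneg (by linarith) _)) hM0
          exact mul_le_mul_of_nonneg_right h2 (Real.rpow_nonneg (by linarith) _)
      _ = M * K * (1+x)^β := by ring
  exact ((h2.union h1).mono_set (by
    intro x hx; obtain ⟨ha, hb⟩ := hx
    rcases le_or_gt x 0 with h | h
    · exact Or.inl ⟨ha.le, h⟩
    · exact Or.inr ⟨h.le, hb.le⟩))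

noncomputable def Lop (α : ℝ) : Polynomial ℝ →ₗ[ℝ] Polynomial ℝ :=
  (LinearMap.mulLeft ℝ ((X:Polynomial ℝ)^2 - 1)).comp
    (Polynomial.derivative.comp Polynomial.derivative)
  + (LinearMap.mulLeft ℝ (Polynomial.C (2*(α+1)) * X)).comp Polynomial.derivative

lemma Lop_apply (α : ℝ) (f : Polynomial ℝ) :
    Lop α f = ((X:Polynomial ℝ)^2 - 1) * derivative (derivative f)
      + Polynomial.C (2*(α+1)) * X * derivative f := by
  simp [Lop, LinearMap.mulLeft_apply, mul_assoc]

lemma Lop_eval (α : ℝ) (f : Polynomial ℝ) (x : ℝ) :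
    (Lop α f).eval x = (x^2 - 1) * (derivative (derivative f)).eval x
      + 2*(α+1) * x * ((derivative f).eval x) := by
  simp [Lop_apply]

lemma Lop_coeff (α : ℝ) (f : Polynomial ℝ) (n : ℕ) (hf : f.natDegree ≤ n) :
    (Lop α f).coeff n = ((n:ℝ) * ((n:ℝ) + 2*α + 1)) * f.coeff n := by
  have hc2 : f.coeff (n+2) = 0 := coeff_eq_zero_of_natDegree_lt (by omega)
  rw [Lop_apply, coeff_add, sub_mul, one_mul, coeff_sub, mul_assoc, coeff_C_mul]
  have hdd : (derivative (derivative f)).coeff n = 0 := by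
    rw [coeff_derivative, coeff_derivative, hc2]; ring
  rw [hdd]
  rcases n with _ | _ | m
  · have h0 : ((X:Polynomial ℝ)^2 * derivative (derivative f)).coeff 0 = 0 := by
      rw [mul_coeff_zero]; simp
    have h1 : ((X:Polynomial ℝ) * derivative f).coeff 0 = 0 := by
      rw [mul_coeff_zero]; simp
    rw [h0, h1]; push_cast; ring
  · have h0 : ((X:Polynomial ℝ)^2 * derivative (derivative f)).coeff 1 = 0 := by
      rw [pow_two, mul_assoc]
      have := coeff_X_mul (n := 0) ((X:Polynomial ℝ) * derivative (derivative f))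
      rw [show (1:ℕ) = 0 + 1 from rfl, this, mul_coeff_zero]; simp
    have h1 : ((X:Polynomial ℝ) * derivative f).coeff 1 = f.coeff 1 := by
      rw [show (1:ℕ) = 0 + 1 from rfl, coeff_X_mul, coeff_derivative]; push_cast; ring
    rw [h0, h1]; push_cast; ring
  · have h0 : ((X:Polynomial ℝ)^2 * derivative (derivative f)).coeff (m+2)
        = f.coeff (m+2) * ((m+2)*(m+1)) := by
      rw [coeff_X_pow_mul, coeff_derivative, coeff_derivative]; push_cast; ring
    have h1 : ((X:Polynomial ℝ) * derivative f).coeff (m+2) = f.coeff (m+2) * (m+2) := by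
      rw [show m+2 = m+1+1 from rfl, coeff_X_mul, coeff_derivative]; push_cast; ring
    rw [h0, h1]; push_cast; ring

lemma Lop_natDegree_le (α : ℝ) (f : Polynomial ℝ) :
    (Lop α f).natDegree ≤ f.natDegree := by
  rw [Lop_apply]
  refine le_trans (natDegree_add_le _ _) (max_le ?_ ?_)
  · rcases le_or_gt f.natDegree 1 with h | h
    · have h1 : (derivative f).natDegree = 0 :=
        Nat.le_zero.mp (le_trans (natDegree_derivative_le f) (by omega))
      have h2 : derivative (derivative f) = 0 := by
        rw [eq_C_of_natDegree_le_zero h1.le, derivative_C]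
      simp [h2]
    · refine le_trans (natDegree_mul_le) ?_
      have hX : ((X:Polynomial ℝ)^2 - 1).natDegree = 2 := by
        rw [show (1:Polynomial ℝ) = Polynomial.C 1 by simp, natDegree_X_pow_sub_C]
      have hdd : (derivative (derivative f)).natDegree ≤ f.natDegree - 2 := by
        refine le_trans (natDegree_derivative_le _) ?_
        have := natDegree_derivative_le f
        omega
      omega
  · rcases Nat.eq_zero_or_pos f.natDegree with h | h
    · have h2 : derivative f = 0 := by
        rw [eq_C_of_natDegree_le_zero h.le, derivative_C]
      simp [h2]
    · refine le_trans (natDegree_mul_le) ?_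
      have h1 : (Polynomial.C (2*(α+1)) * (X:Polynomial ℝ)).natDegree ≤ 1 :=
        le_trans natDegree_mul_le (by rw [natDegree_C, natDegree_X])
      have h2 : (derivative f).natDegree ≤ f.natDegree - 1 := natDegree_derivative_le f
      omega

lemma ibp (α : ℝ) (hα : -1 < α) (f g : Polynomial ℝ) :
    (∫ x in Set.Ioo (-1:ℝ) 1,
        (derivative f).eval x * (derivative g).eval x * (1 - x^2) ^ (α+1))
      = ∫ x in Set.Ioo (-1:ℝ) 1, (Lop α f).eval x * g.eval x * (1 - x^2) ^ α := by
  have hα1 : (0:ℝ) < α + 1 := by linarith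
  set F : ℝ → ℝ := fun x => g.eval x * ((derivative f).eval x * (1 - x^2) ^ (α+1)) with hF
  set D : ℝ → ℝ := fun x =>
    (derivative f).eval x * (derivative g).eval x * (1 - x^2) ^ (α+1)
      - (Lop α f).eval x * g.eval x * (1 - x^2) ^ α with hD
  have hi1 : IntegrableOn
      (fun x => (derivative f).eval x * (derivative g).eval x * (1-x^2)^(α+1))
      (Set.Ioo (-1:ℝ) 1) := by
    have := integrableOn_poly_weight (derivative f * derivative g) (by linarith : (-1:ℝ) < α+1)
    simpa [eval_mul] using this
  have hi2 : IntegrableOn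
      (fun x => (Lop α f).eval x * g.eval x * (1-x^2)^α) (Set.Ioo (-1:ℝ) 1) := by
    have := integrableOn_poly_weight (Lop α f * g) hα
    simpa [eval_mul] using this
  have key : ∀ x ∈ Set.Ioo (-1:ℝ) 1, HasDerivAt F (D x) x := by
    intro x hx
    obtain ⟨hxa, hxb⟩ := hx
    have hx2 : 0 < 1 - x^2 := by nlinarith
    have hb : HasDerivAt (fun y : ℝ => 1 - y^2) (-(2*x)) x := by
      simpa using (hasDerivAt_pow 2 x).const_sub 1
    have hw : HasDerivAt (fun y : ℝ => (1-y^2)^(α+1))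
        (-(2 * x * (α + 1) * (1 - x ^ 2) ^ α)) x := by
      have h := hb.rpow_const (p := α+1) (Or.inl hx2.ne')
      simpa [add_sub_cancel_right] using h
    have hf' := (derivative f).hasDerivAt (𝕜 := ℝ) x
    have hg' := g.hasDerivAt (𝕜 := ℝ) x
    have hprod := hg'.mul (hf'.mul hw)
    convert hprod using 1
    any_goals rfl
    have hsplit : (1-x^2)^(α+1) = (1-x^2)^α * (1-x^2) := by
      rw [Real.rpow_add hx2, Real.rpow_one]
    rw [hD]
    simp only [Lop_eval, hsplit, Pi.mul_apply]
    ring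
  have hFcont : ContinuousOn F (Set.Icc (-1:ℝ) 1) := by
    intro x hx
    refine ContinuousAt.continuousWithinAt ?_
    refine (g.continuous_aeval.continuousAt).mul
      (((derivative f).continuous_aeval.continuousAt).mul ?_)
    refine ContinuousAt.rpow_const ?_ (Or.inr hα1.le)
    exact (continuous_const.sub (continuous_pow 2)).continuousAt
  have hD_int : IntervalIntegrable D volume (-1) 1 := by
    rw [intervalIntegrable_iff_integrableOn_Ioc_of_le (by norm_num),
      integrableOn_Ioc_iff_integrableOn_Ioo]
    exact hi1.sub hi2
  have hftc := intervalIntegral.integral_eq_sub_of_hasDeriv_right_of_le (by norm_num)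
    hFcont (fun x hx => (key x hx).hasDerivWithinAt) hD_int
  have hF1 : F 1 = 0 := by
    simp [hF, Real.zero_rpow hα1.ne']
  have hFm1 : F (-1) = 0 := by
    have : (1:ℝ) - (-1:ℝ)^2 = 0 := by norm_num
    simp [hF, this, Real.zero_rpow hα1.ne']
  rw [hF1, hFm1, sub_zero] at hftc
  rw [intervalIntegral.integral_of_le (by norm_num : (-1:ℝ) ≤ 1),
    MeasureTheory.integral_Ioc_eq_integral_Ioo] at hftc
  have hsub := MeasureTheory.integral_sub hi1 hi2
  rw [hD] at hftc
  simp only at hftc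
  have : (∫ x in Set.Ioo (-1:ℝ) 1,
      ((derivative f).eval x * (derivative g).eval x * (1-x^2)^(α+1)
        - (Lop α f).eval x * g.eval x * (1-x^2)^α)) = 0 := hftc
  rw [hsub] at this
  linarith

noncomputable def Bform (α : ℝ) (f g : Polynomial ℝ) : ℝ :=
  ∫ x in Set.Ioo (-1:ℝ) 1, f.eval x * g.eval x * (1-x^2)^α

lemma Bform_comm (α : ℝ) (f g : Polynomial ℝ) : Bform α f g = Bform α g f := by
  unfold Bform; congr 1; ext x; ring

lemma Bform_eq_integral_poly (α : ℝ) (f g : Polynomial ℝ) :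
    Bform α f g = ∫ x in Set.Ioo (-1:ℝ) 1, (f*g).eval x * (1-x^2)^α := by
  unfold Bform; congr 1; ext x; rw [eval_mul]

lemma Bform_add_left (α : ℝ) (hα : -1 < α) (f₁ f₂ g : Polynomial ℝ) :
    Bform α (f₁ + f₂) g = Bform α f₁ g + Bform α f₂ g := by
  rw [Bform_eq_integral_poly, Bform_eq_integral_poly, Bform_eq_integral_poly,
    ← MeasureTheory.integral_add (integrableOn_poly_weight (f₁*g) hα)
      (integrableOn_poly_weight (f₂*g) hα)]
  congr 1; ext x; simp only [eval_add, eval_mul]; ring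

lemma Bform_smul_left (α : ℝ) (r : ℝ) (f g : Polynomial ℝ) :
    Bform α (r • f) g = r * Bform α f g := by
  unfold Bform
  rw [← smul_eq_mul, ← MeasureTheory.integral_smul]
  congr 1; ext x; simp [smul_eq_mul]; ring

lemma Bform_self_nonneg (α : ℝ) (f : Polynomial ℝ) : 0 ≤ Bform α f f := by
  refine MeasureTheory.setIntegral_nonneg measurableSet_Ioo (fun x hx => ?_)
  exact mul_nonneg (mul_self_nonneg _) (Real.rpow_nonneg (by nlinarith [hx.1, hx.2]) _)

lemma Bform_self_eq_zero (α : ℝ) (hα : -1 < α) (f : Polynomial ℝ)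
    (h : Bform α f f = 0) : f = 0 := by
  by_contra hf
  have hint : IntegrableOn (fun x => f.eval x * f.eval x * (1-x^2)^α)
      (Set.Ioo (-1:ℝ) 1) := by
    have := integrableOn_poly_weight (f*f) hα
    simpa [eval_mul] using this
  have hnonneg : 0 ≤ᵐ[volume.restrict (Set.Ioo (-1:ℝ) 1)]
      fun x => f.eval x * f.eval x * (1-x^2)^α := by
    filter_upwards [ae_restrict_mem measurableSet_Ioo] with x hx
    exact mul_nonneg (mul_self_nonneg _) (Real.rpow_nonneg (by nlinarith [hx.1, hx.2]) _)
  have hzero := (MeasureTheory.integral_eq_zero_iff_of_nonneg_ae hnonneg hint).mp h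
  have hae : ∀ᵐ x ∂(volume.restrict (Set.Ioo (-1:ℝ) 1)), f.eval x = 0 := by
    have h2 := hzero
    rw [Filter.EventuallyEq] at h2
    filter_upwards [h2, ae_restrict_mem measurableSet_Ioo] with x hx hmem
    obtain ⟨h1', h2'⟩ := hmem
    have hw : (0:ℝ) < (1-x^2)^α := Real.rpow_pos_of_pos (by nlinarith) _
    by_contra hne
    have : f.eval x * f.eval x * (1-x^2)^α > 0 :=
      mul_pos (mul_self_pos.mpr hne) hw
    simp only [Pi.zero_apply] at hx
    linarith
  have hroots : {x : ℝ | f.IsRoot x}.Finite := Polynomial.finite_setOf_isRoot hf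
  have hnull : volume ({x : ℝ | f.eval x ≠ 0} ∩ Set.Ioo (-1:ℝ) 1) = 0 := by
    have := (MeasureTheory.ae_restrict_iff' measurableSet_Ioo).mp hae
    rw [MeasureTheory.ae_iff] at this
    convert this using 2
    ext x; simp only [Set.mem_inter_iff, Set.mem_setOf_eq, not_forall]
    tauto
  have hsub : Set.Ioo (-1:ℝ) 1 ⊆ {x : ℝ | f.IsRoot x}
      ∪ ({x : ℝ | f.eval x ≠ 0} ∩ Set.Ioo (-1:ℝ) 1) := by
    intro x hx
    by_cases hx0 : f.eval x = 0
    · exact Or.inl hx0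
    · exact Or.inr ⟨hx0, hx⟩
  have hle := MeasureTheory.measure_mono (μ := (volume : MeasureTheory.Measure ℝ)) hsub
  have hle2 := le_trans hle (MeasureTheory.measure_union_le _ _)
  rw [hroots.measure_zero volume, hnull, add_zero] at hle2
  rw [Real.volume_Ioo] at hle2
  simp only [nonpos_iff_eq_zero, ENNReal.ofReal_eq_zero] at hle2
  norm_num at hle2

lemma eig_bound (α : ℝ) (nr pr : ℝ) (h3 : 0 ≤ nr) (h1 : nr ≤ pr) (h2 : 1 ≤ pr) :
    nr * (nr + 2*α + 1) ≤ (2*|α| + 2) * pr^2 := by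
  have hp2 : nr ≤ pr^2 := by nlinarith
  have hnn : nr^2 ≤ pr^2 := by nlinarith
  have ha1 : 2*α*nr ≤ 2*|α| * nr := by nlinarith [le_abs_self α]
  have ha2 : 2*|α| * nr ≤ 2*|α| * pr^2 := by nlinarith [abs_nonneg α]
  nlinarith [abs_nonneg α]

/-- Weighted inverse inequality: ∫ P'² (1-x²)^{α+1} ≤ C p² ∫ P² (1-x²)^α. -/
theorem inverse_estimate_derivative (α : ℝ) (hα : -1 < α) :
    ∃ C : ℝ, 0 < C ∧ ∀ p : ℕ, 1 ≤ p → ∀ P : Polynomial ℝ, P.natDegree ≤ p →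
      (∫ x in Set.Ioo (-1 : ℝ) 1,
          ((Polynomial.derivative P).eval x) ^ 2 * (1 - x^2) ^ (α + 1)) ≤
        C * (p : ℝ) ^ 2 *
          ∫ x in Set.Ioo (-1 : ℝ) 1, (P.eval x) ^ 2 * (1 - x^2) ^ α := by
  refine ⟨2*|α| + 2, by positivity, ?_⟩
  intro p hp P hP
  set N := p + 1 with hN
  set E := Polynomial.degreeLT ℝ N with hE
  haveI hfd : FiniteDimensional ℝ E := (Polynomial.degreeLTEquiv ℝ N).symm.finiteDimensional
  have hn : Module.finrank ℝ E = N := by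
    rw [(Polynomial.degreeLTEquiv ℝ N).finrank_eq, Module.finrank_fin_fun]
  let core : InnerProductSpace.Core ℝ E :=
    { inner := fun u v => Bform α u.1 v.1
      conj_inner_symm := fun u v => by simpa using Bform_comm α v.1 u.1
      re_inner_nonneg := fun u => by simpa using Bform_self_nonneg α u.1
      definite := fun u h => Subtype.ext (Bform_self_eq_zero α hα u.1 h)
      add_left := fun u v w => Bform_add_left α hα u.1 v.1 w.1
      smul_left := fun u v r => by simpa using Bform_smul_left α r u.1 v.1 }
  letI : NormedAddCommGroup E := core.toNormedAddCommGroup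
  letI : InnerProductSpace ℝ E := InnerProductSpace.ofCore core.toCore
  have hpres : ∀ f ∈ Polynomial.degreeLT ℝ N, Lop α f ∈ Polynomial.degreeLT ℝ N := by
    intro f hf
    rw [Polynomial.mem_degreeLT] at hf ⊢
    rcases eq_or_ne f 0 with rfl | h0
    · rw [map_zero, Polynomial.degree_zero]
      exact WithBot.bot_lt_coe _
    · have h1 : (Lop α f).natDegree ≤ f.natDegree := Lop_natDegree_le α f
      have h2 : f.natDegree < N := (Polynomial.natDegree_lt_iff_degree_lt h0).mpr hf
      exact lt_of_le_of_lt Polynomial.degree_le_natDegree (by exact_mod_cast lt_of_le_of_lt h1 h2)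
  set T : E →ₗ[ℝ] E := (Lop α).restrict hpres with hT
  have hTval : ∀ u : E, (T u).1 = Lop α u.1 := fun u => rfl
  have hTsym : T.IsSymmetric := by
    intro u v
    show Bform α (Lop α u.1) v.1 = Bform α u.1 (Lop α v.1)
    unfold Bform
    calc (∫ x in Set.Ioo (-1:ℝ) 1, (Lop α u.1).eval x * v.1.eval x * (1-x^2)^α)
        = ∫ x in Set.Ioo (-1:ℝ) 1,
            (derivative u.1).eval x * (derivative v.1).eval x * (1-x^2)^(α+1) :=
          (ibp α hα u.1 v.1).symm
      _ = ∫ x in Set.Ioo (-1:ℝ) 1,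
            (derivative v.1).eval x * (derivative u.1).eval x * (1-x^2)^(α+1) := by
          congr 1; ext x; ring
      _ = ∫ x in Set.Ioo (-1:ℝ) 1, (Lop α v.1).eval x * u.1.eval x * (1-x^2)^α :=
          ibp α hα v.1 u.1
      _ = ∫ x in Set.Ioo (-1:ℝ) 1, u.1.eval x * (Lop α v.1).eval x * (1-x^2)^α := by
          congr 1; ext x; ring
  set b := hTsym.eigenvectorBasis hn with hb
  set μ := hTsym.eigenvalues hn with hμdef
  have hμ : ∀ i, μ i ≤ (2*|α| + 2) * (p:ℝ)^2 := by
    intro i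
    have hev := hTsym.apply_eigenvectorBasis hn i
    set q : Polynomial ℝ := (b i).1 with hq
    have hq0 : q ≠ 0 := by
      intro h
      exact b.toBasis.ne_zero i (Subtype.ext h)
    have hqeq : Lop α q = μ i • q := congrArg Subtype.val hev
    set n := q.natDegree with hnq
    have hco : (Lop α q).coeff n = ((n:ℝ) * ((n:ℝ) + 2*α + 1)) * q.coeff n :=
      Lop_coeff α q n le_rfl
    have heq2 : μ i * q.coeff n = ((n:ℝ) * ((n:ℝ) + 2*α + 1)) * q.coeff n := by
      rw [← hco, hqeq, Polynomial.coeff_smul, smul_eq_mul]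
    have hlc : q.coeff n ≠ 0 := by
      rw [hnq, Polynomial.coeff_natDegree]
      exact Polynomial.leadingCoeff_ne_zero.mpr hq0
    have hμi : μ i = (n:ℝ) * ((n:ℝ) + 2*α + 1) := mul_right_cancel₀ hlc heq2
    have hn' : n ≤ p := by
      have hmem := (b i).2
      rw [Polynomial.mem_degreeLT] at hmem
      have := (Polynomial.natDegree_lt_iff_degree_lt hq0).mpr hmem
      omega
    rw [hμi]
    have h1 : (n:ℝ) ≤ (p:ℝ) := by exact_mod_cast hn'
    have h2 : (1:ℝ) ≤ (p:ℝ) := by exact_mod_cast hp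
    exact eig_bound α _ _ (Nat.cast_nonneg n) h1 h2
  -- the element of E corresponding to P
  have hPmem : P ∈ Polynomial.degreeLT ℝ N := by
    rw [Polynomial.mem_degreeLT]
    refine lt_of_le_of_lt Polynomial.degree_le_natDegree ?_
    exact_mod_cast Nat.lt_succ_of_le hP
  set v : E := ⟨P, hPmem⟩ with hv
  have key : (inner ℝ (T v) v : ℝ) ≤ ((2*|α| + 2) * (p:ℝ)^2) * (inner ℝ v v : ℝ) := by
    have h1 : (inner ℝ (T v) v : ℝ) = ∑ i, μ i * (b.repr v i * b.repr v i) := by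
      nth_rewrite 1 [← b.sum_repr v]
      rw [map_sum, sum_inner]
      congr 1; funext i
      rw [_root_.map_smul, hTsym.apply_eigenvectorBasis hn i, smul_smul, real_inner_smul_left,
        ← b.repr_apply_apply]
      simp only [RCLike.ofReal_real_eq_id, id_eq, hμdef]
      ring
    have h2 : (inner ℝ v v : ℝ) = ∑ i, b.repr v i * b.repr v i := by
      nth_rewrite 1 [← b.sum_repr v]
      rw [sum_inner]
      congr 1; funext i
      rw [real_inner_smul_left, ← b.repr_apply_apply]
    rw [h1, h2, Finset.mul_sum]
    refine Finset.sum_le_sum fun i _ => ?_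
    exact mul_le_mul_of_nonneg_right (hμ i) (mul_self_nonneg _)
  have hinner1 : (inner ℝ (T v) v : ℝ) = Bform α (Lop α P) P := rfl
  have hinner2 : (inner ℝ v v : ℝ) = Bform α P P := rfl
  have hLHS : (∫ x in Set.Ioo (-1 : ℝ) 1,
      ((Polynomial.derivative P).eval x) ^ 2 * (1 - x^2) ^ (α + 1)) = Bform α (Lop α P) P := by
    rw [show Bform α (Lop α P) P = ∫ x in Set.Ioo (-1:ℝ) 1,
        (Lop α P).eval x * P.eval x * (1-x^2)^α from rfl, ← ibp α hα P P]
    congr 1; ext x; ring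
  have hRHS : (∫ x in Set.Ioo (-1 : ℝ) 1, (P.eval x) ^ 2 * (1 - x^2) ^ α) = Bform α P P := by
    rw [show Bform α P P = ∫ x in Set.Ioo (-1:ℝ) 1,
        P.eval x * P.eval x * (1-x^2)^α from rfl]
    congr 1; ext x; ring
  rw [hLHS, hRHS]
  calc Bform α (Lop α P) P = (inner ℝ (T v) v : ℝ) := hinner1.symm
    _ ≤ ((2*|α| + 2) * (p:ℝ)^2) * (inner ℝ v v : ℝ) := key
    _ = (2*|α| + 2) * (p:ℝ)^2 * Bform α P P := by rw [hinner2]
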